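/- arXiv:1801.00575 — 2 statements merged into one kernel-verified Lean document; each statement's English description precedes it below -/
import Mathlib

section
/- Let M ≥ 1, ν₀ < 0, ω > 0, r > 0, c₁, c₂ ≥ 0, a₁, ..., a_p ≥ 0, and suppose (c₁ + c₂ e^{-ν₀ r}) + (1/ω)∑_{k=1}^p a_k < |ν₀|/M. Then σ := -ν₀ - (M/ω)∑_{k=1}^{p} a_k - M(c₁ + c₂ e^{-ν₀ r}) > 0, and if a function Δ : [0,∞) → [0,∞) satisfies Δ(t) ≤ C ∏_{0 < t_k < t}(1 + M a_k) e^{(M(c₁ + c₂ e^{-ν₀ r}) + ν₀) t} for all t ≥ 0, where the impulse times satisfy t_{k+p} = t_k + ω with 0 < t₁ < ⋯ < t_p < ω and a_k is p-periodic, then Δ(t) ≤ C' e^{-σ' t} for some constant C' ≥ 0 and some σ' > 0; in particular Δ(t) → 0 as t → ∞. -/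
/-- Decay estimate in the asymptotic stability argument: under
`(c₁ + c₂e^{-ν₀r}) + (1/ω)∑a_k < |ν₀|/M`, the exponent
`σ = -ν₀ - (M/ω)∑a_k - M(c₁+c₂e^{-ν₀r})` is positive, and any nonnegative `Δ`
dominated by `C ∏_{0<t_k<t}(1+Ma_k) e^{(M(c₁+c₂e^{-ν₀r})+ν₀)t}` decays exponentially
to `0`. -/
theorem stmt12 (M ν₀ ω r c₁ c₂ : ℝ) (p : ℕ) (hp : 0 < p)
    (hM : 1 ≤ M) (hν₀ : ν₀ < 0) (hω : 0 < ω) (hr : 0 < r)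
    (hc₁ : 0 ≤ c₁) (hc₂ : 0 ≤ c₂)
    (a : ℕ → ℝ) (ha : ∀ k, 0 ≤ a k) (haper : ∀ k, a (k + p) = a k)
    (tseq : ℕ → ℝ) (htmono : StrictMono tseq)
    (htbase : ∀ k < p, 0 < tseq k ∧ tseq k < ω)
    (htper : ∀ k, tseq (k + p) = tseq k + ω)
    (hfin : ∀ t : ℝ, {k : ℕ | tseq k < t}.Finite)
    (hcond : (c₁ + c₂ * Real.exp (-ν₀ * r)) + (1 / ω) * ∑ k ∈ Finset.range p, a k
      < (-ν₀) / M)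
    (σ : ℝ)
    (hσ : σ = -ν₀ - (M / ω) * (∑ k ∈ Finset.range p, a k)
      - M * (c₁ + c₂ * Real.exp (-ν₀ * r))) :
    0 < σ ∧
    ∀ (Δ : ℝ → ℝ) (C : ℝ), 0 ≤ C → (∀ t : ℝ, 0 ≤ t → 0 ≤ Δ t) →
      (∀ t : ℝ, 0 ≤ t →
        Δ t ≤ C * (∏ k ∈ (hfin t).toFinset, (1 + M * a k))
          * Real.exp ((M * (c₁ + c₂ * Real.exp (-ν₀ * r)) + ν₀) * t)) →
      ∃ C' : ℝ, 0 ≤ C' ∧ ∃ σ' : ℝ, 0 < σ' ∧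
        (∀ t : ℝ, 0 ≤ t → Δ t ≤ C' * Real.exp (-σ' * t)) ∧
        Filter.Tendsto Δ Filter.atTop (nhds 0) := by
  have hM0 : (0:ℝ) < M := lt_of_lt_of_le one_pos hM
  set E := c₁ + c₂ * Real.exp (-ν₀ * r) with hE
  set S := ∑ k ∈ Finset.range p, a k with hS
  have hE0 : 0 ≤ E := add_nonneg hc₁ (mul_nonneg hc₂ (Real.exp_pos _).le)
  have hS0 : 0 ≤ S := Finset.sum_nonneg fun k _ => ha k
  have hων : ω ≠ 0 := ne_of_gt hω
  have hσpos : 0 < σ := by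
    have h := (lt_div_iff₀ hM0).mp hcond
    rw [hσ]
    have h1 : (M / ω) * S = (1/ω) * S * M := by field_simp
    nlinarith [h, h1]
  refine ⟨hσpos, ?_⟩
  intro Δ C hC hΔ0 hbound
  -- periodicity of a
  have haper' : ∀ n j, a (j + n * p) = a j := by
    intro n
    induction n with
    | zero => simp
    | succ n ih =>
      intro j
      have h : j + (n+1) * p = (j + n * p) + p := by ring
      rw [h, haper, ih]
  -- periodicity of tseq
  have htper' : ∀ n j, tseq (j + n * p) = tseq j + n * ω := by
    intro n
    induction n with
    | zero => simp
    | succ n ih =>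
      intro j
      have h : j + (n+1) * p = (j + n * p) + p := by ring
      rw [h, htper, ih]
      push_cast
      ring
  -- periodic sum
  have hsum : ∀ n : ℕ, ∑ k ∈ Finset.range (n * p), a k = n * S := by
    intro n
    induction n with
    | zero => simp
    | succ n ih =>
      have h : (n+1) * p = n * p + p := by ring
      rw [h, Finset.sum_range_add, ih]
      have : ∀ j ∈ Finset.range p, a (n * p + j) = a j := by
        intro j _
        rw [show n * p + j = j + n * p from by ring, haper']
      rw [Finset.sum_congr rfl this]
      push_cast
      ring
  -- key product bound
  have hprod : ∀ t : ℝ, 0 ≤ t →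
      (∏ k ∈ (hfin t).toFinset, (1 + M * a k)) ≤
        Real.exp (M * (t / ω + 1) * S) := by
    intro t ht
    set N := ⌈t / ω⌉₊ with hN
    have hsub : (hfin t).toFinset ⊆ Finset.range (N * p) := by
      intro k hk
      have hk' : tseq k < t := by simpa using hk
      have hdecomp : tseq k = tseq (k % p) + ((k / p : ℕ) : ℝ) * ω := by
        conv_lhs => rw [← Nat.mod_add_div' k p]
        exact htper' (k / p) (k % p)
      have hpos : 0 < tseq (k % p) := (htbase _ (Nat.mod_lt _ hp)).1
      have hq : ((k / p : ℕ) : ℝ) * ω < t := by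
        rw [hdecomp] at hk'; linarith
      have hq' : ((k / p : ℕ) : ℝ) < t / ω := (lt_div_iff₀ hω).mpr hq
      have hqN : k / p < N := Nat.lt_ceil.mpr hq'
      have : k < (k / p + 1) * p := by
        calc k = p * (k / p) + k % p := (Nat.div_add_mod k p).symm
          _ < p * (k / p) + p := Nat.add_lt_add_left (Nat.mod_lt k hp) _
          _ = (k / p + 1) * p := by ring
      refine Finset.mem_range.mpr (lt_of_lt_of_le this ?_)
      exact Nat.mul_le_mul_right p hqN
    have h1 : (∏ k ∈ (hfin t).toFinset, (1 + M * a k)) ≤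
        ∏ k ∈ (hfin t).toFinset, Real.exp (M * a k) := by
      apply Finset.prod_le_prod
      · intro k _; nlinarith [ha k]
      · intro k _
        have := Real.add_one_le_exp (M * a k)
        linarith
    have h2 : (∏ k ∈ (hfin t).toFinset, Real.exp (M * a k)) =
        Real.exp (M * ∑ k ∈ (hfin t).toFinset, a k) := by
      rw [← Real.exp_sum, ← Finset.mul_sum]
    have h3 : Real.exp (M * ∑ k ∈ (hfin t).toFinset, a k) ≤
        Real.exp (M * (N * S)) := by
      apply Real.exp_le_exp.mpr
      apply mul_le_mul_of_nonneg_left _ hM0.le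
      rw [← hsum N]
      exact Finset.sum_le_sum_of_subset_of_nonneg hsub fun k _ _ => ha k
    have h4 : (N : ℝ) ≤ t / ω + 1 := by
      have := Nat.ceil_lt_add_one (div_nonneg ht hω.le)
      exact le_of_lt this
    have h5 : Real.exp (M * (N * S)) ≤ Real.exp (M * (t / ω + 1) * S) := by
      apply Real.exp_le_exp.mpr
      have hMS : 0 ≤ M * S := mul_nonneg hM0.le hS0
      nlinarith
    calc (∏ k ∈ (hfin t).toFinset, (1 + M * a k)) ≤ _ := h1
      _ = _ := h2
      _ ≤ _ := h3
      _ ≤ _ := h5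
  refine ⟨C * Real.exp (M * S), by positivity, σ, hσpos, ?_, ?_⟩
  · intro t ht
    have hb := hbound t ht
    have hP := hprod t ht
    have hexpo : M * (t / ω + 1) * S + (M * E + ν₀) * t = M * S + (-σ) * t := by
      rw [hσ]; field_simp; ring
    calc Δ t ≤ C * (∏ k ∈ (hfin t).toFinset, (1 + M * a k))
          * Real.exp ((M * E + ν₀) * t) := hb
      _ ≤ C * Real.exp (M * (t / ω + 1) * S) * Real.exp ((M * E + ν₀) * t) := by
          apply mul_le_mul_of_nonneg_right _ (Real.exp_pos _).le
          exact mul_le_mul_of_nonneg_left hP hC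
      _ = C * Real.exp (M * S) * Real.exp (-σ * t) := by
          rw [mul_assoc C, ← Real.exp_add, hexpo, Real.exp_add, ← mul_assoc]
  · -- tendsto
    have hlim : Filter.Tendsto (fun t : ℝ => C * Real.exp (M * S) * Real.exp (-σ * t))
        Filter.atTop (nhds 0) := by
      have h1 : Filter.Tendsto (fun t : ℝ => σ * t) Filter.atTop Filter.atTop :=
        Filter.Tendsto.const_mul_atTop hσpos Filter.tendsto_id
      have h2 : Filter.Tendsto (fun t : ℝ => Real.exp (-σ * t)) Filter.atTop (nhds 0) := by
        refine (Real.tendsto_exp_neg_atTop_nhds_zero.comp h1).congr fun t => ?_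
        simp [Function.comp, neg_mul]
      simpa using h2.const_mul (C * Real.exp (M * S))
    have h0 : Filter.Tendsto (fun _ : ℝ => (0:ℝ)) Filter.atTop (nhds 0) :=
      tendsto_const_nhds
    apply tendsto_of_tendsto_of_tendsto_of_le_of_le' h0 hlim
    · filter_upwards [Filter.eventually_ge_atTop (0:ℝ)] with t ht
      exact hΔ0 t ht
    · filter_upwards [Filter.eventually_ge_atTop (0:ℝ)] with t ht
      have hb := hbound t ht
      have hP := hprod t ht
      have hexpo : M * (t / ω + 1) * S + (M * E + ν₀) * t = M * S + (-σ) * t := by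
        rw [hσ]; field_simp; ring
      calc Δ t ≤ C * (∏ k ∈ (hfin t).toFinset, (1 + M * a k))
            * Real.exp ((M * E + ν₀) * t) := hb
        _ ≤ C * Real.exp (M * (t / ω + 1) * S) * Real.exp ((M * E + ν₀) * t) := by
            apply mul_le_mul_of_nonneg_right _ (Real.exp_pos _).le
            exact mul_le_mul_of_nonneg_left hP hC
        _ = C * Real.exp (M * S) * Real.exp (-σ * t) := by
            rw [mul_assoc C, ← Real.exp_add, hexpo, Real.exp_add, ← mul_assoc]
end

section
/- Let X be a Banach space, T(t), t ≥ 0, a C₀-semigroup on X, ω > 0, h : [0,∞) → X piecewise continuous, 0 < t₁ < t₂ < ⋯ a strictly increasing sequence of impulse times, v_k ∈ X, and define u(t) = T(t)x₀ + ∫₀ᵗ T(t-s)h(s) ds + ∑_{0 < t_k < t} T(t - t_k) v_k. Suppose h(t + ω) = h(t) for all t ≥ 0, t_{k+p} = t_k + ω and v_{k+p} = v_k for all k, exactly p impulse points lie in (0, ω), and x₀ satisfies (I - T(ω)) x₀ = ∫₀^ω T(ω - s) h(s) ds + ∑_{k=1}^{p} T(ω - t_k) v_k. Then u(t + ω) =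 u(t) for all t ≥ 0. -/
open MeasureTheory intervalIntegral

section Aux

variable {X : Type*} [NormedAddCommGroup X] [NormedSpace ℝ X] [CompleteSpace X]

/-- Strong measurability of `s ↦ T (c - s) (f s)` for a strongly continuous family `T`. -/
lemma aux_meas (T : ℝ → X →L[ℝ] X)
    (hTcont : ∀ x : X, ContinuousOn (fun t => T t x) (Set.Ici (0 : ℝ)))
    (c : ℝ) {S : Set ℝ} (hS : MeasurableSet S) (hSc : S ⊆ Set.Iic c)
    {f : ℝ → X} (hf : AEStronglyMeasurable f (volume.restrict S)) :
    AEStronglyMeasurable (fun s => T (c - s) (f s)) (volume.restrict S) := by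
  have hbase : ∀ y : X, AEStronglyMeasurable (fun s => T (c - s) y) (volume.restrict S) := by
    intro y
    have hcont : ContinuousOn (fun s : ℝ => T (c - s) y) (Set.Iic c) := by
      have hsub : ContinuousOn (fun s : ℝ => c - s) (Set.Iic c) :=
        (continuous_const.sub continuous_id).continuousOn
      exact (hTcont y).comp hsub (fun s hs => Set.mem_Ici.2 (sub_nonneg.2 (Set.mem_Iic.1 hs)))
    have h1 : AEStronglyMeasurable (fun s : ℝ => T (c - s) y)
        (volume.restrict (Set.Iic c)) := hcont.aestronglyMeasurable measurableSet_Iic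
    have hres : volume.restrict S = (volume.restrict (Set.Iic c)).restrict S := by
      rw [Measure.restrict_restrict hS, Set.inter_eq_left.2 hSc]
    rw [hres]
    exact h1.restrict
  have hsimple : ∀ φ : SimpleFunc ℝ X,
      AEStronglyMeasurable (fun s => T (c - s) (φ s)) (volume.restrict S) := by
    intro φ
    refine SimpleFunc.induction (fun y {s} hs => ?_) (fun φ ψ _ hφ hψ => ?_) φ
    · have heq : (fun x => T (c - x) ((SimpleFunc.piecewise s hs
          (SimpleFunc.const _ y) (SimpleFunc.const _ 0)) x))
          = s.indicator (fun x => T (c - x) y) := by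
        funext x
        by_cases hx : x ∈ s <;>
          simp [SimpleFunc.piecewise_apply, Set.indicator_apply, hx]
      rw [heq]
      exact (hbase y).indicator hs
    · have heq : (fun x => T (c - x) ((φ + ψ) x))
          = fun x => T (c - x) (φ x) + T (c - x) (ψ x) := by
        funext x; simp [map_add]
      rw [heq]
      exact hφ.add hψ
  set f₁ := hf.mk f with hf₁def
  have hf₁ : StronglyMeasurable f₁ := hf.stronglyMeasurable_mk
  have heq : f =ᵐ[volume.restrict S] f₁ := hf.ae_eq_mk
  have hmk : AEStronglyMeasurable (fun s => T (c - s) (f₁ s)) (volume.restrict S) := by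
    refine aestronglyMeasurable_of_tendsto_ae Filter.atTop
      (fun n => hsimple (hf₁.approx n)) (Filter.Eventually.of_forall fun s => ?_)
    exact ((T (c - s)).continuous.tendsto _).comp (hf₁.tendsto_approx s)
  exact hmk.congr (heq.mono fun s hs => by simp only [hs])

/-- Interval integrability of `s ↦ T (c - s) (h s)`. -/
lemma aux_int (T : ℝ → X →L[ℝ] X)
    (hTcont : ∀ x : X, ContinuousOn (fun t => T t x) (Set.Ici (0 : ℝ)))
    (h : ℝ → X) (hhint : ∀ a b : ℝ, IntervalIntegrable h volume a b)
    (c a b : ℝ) (ha : 0 ≤ a) (hb : 0 ≤ b) (hac : a ≤ c) (hbc : b ≤ c) :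
    IntervalIntegrable (fun s => T (c - s) (h s)) volume a b := by
  rw [intervalIntegrable_iff]
  have hsub : Set.uIoc a b ⊆ Set.Icc 0 c := by
    intro s hs
    rcases hs with ⟨h1, h2⟩
    exact ⟨le_trans (le_min ha hb) h1.le, le_trans h2 (max_le hac hbc)⟩
  obtain ⟨C, hC⟩ : ∃ C, ∀ r : Set.Icc (0 : ℝ) c, ‖T r‖ ≤ C := by
    apply banach_steinhaus
    intro x
    obtain ⟨C, hC⟩ := isCompact_Icc.exists_bound_of_continuousOn
      ((hTcont x).mono Set.Icc_subset_Ici_self)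
    exact ⟨C, fun r => hC r r.2⟩
  have hmeas : AEStronglyMeasurable (fun s => T (c - s) (h s))
      (volume.restrict (Set.uIoc a b)) := by
    refine aux_meas T hTcont c measurableSet_uIoc
      (hsub.trans Set.Icc_subset_Iic_self) ?_
    exact (intervalIntegrable_iff.mp (hhint a b)).aestronglyMeasurable
  have hg : IntegrableOn (fun s => |C| * ‖h s‖) (Set.uIoc a b) volume :=
    (intervalIntegrable_iff.mp (hhint a b)).norm.const_mul |C|
  refine Integrable.mono hg hmeas ?_
  filter_upwards [ae_restrict_mem measurableSet_uIoc] with s hs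
  have hmem : s ∈ Set.Icc 0 c := hsub hs
  have hmem' : c - s ∈ Set.Icc (0 : ℝ) c :=
    ⟨sub_nonneg.2 hmem.2, by linarith [hmem.1]⟩
  calc ‖T (c - s) (h s)‖ ≤ ‖T (c - s)‖ * ‖h s‖ := (T (c - s)).le_opNorm _
    _ ≤ |C| * ‖h s‖ :=
        mul_le_mul_of_nonneg_right ((hC ⟨c - s, hmem'⟩).trans (le_abs_self C))
          (norm_nonneg _)
    _ ≤ ‖|C| * ‖h s‖‖ := le_abs_self _

end Aux

/-- If the initial value `x₀` satisfies
`(I-T(ω))x₀ = ∫₀^ω T(ω-s)h(s)ds + ∑_{k=1}^p T(ω-t_k)v_k`, then the mild solution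
`u(t) = T(t)x₀ + ∫₀ᵗ T(t-s)h(s)ds + ∑_{0<t_k<t} T(t-t_k)v_k` of the impulsive linear
equation is `ω`-periodic on `[0,∞)`. -/
theorem stmt14 {X : Type*} [NormedAddCommGroup X] [NormedSpace ℝ X] [CompleteSpace X]
    (T : ℝ → X →L[ℝ] X) (ω : ℝ) (hω : 0 < ω)
    (hT0 : T 0 = 1)
    (hTadd : ∀ s t : ℝ, 0 ≤ s → 0 ≤ t → T (s + t) = T s ∘L T t)
    (hTcont : ∀ x : X, ContinuousOn (fun t => T t x) (Set.Ici (0 : ℝ)))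
    (h : ℝ → X) (hhper : ∀ t : ℝ, 0 ≤ t → h (t + ω) = h t)
    (hhint : ∀ a b : ℝ, IntervalIntegrable h volume a b)
    (p : ℕ) (hp : 0 < p)
    (tseq : ℕ → ℝ) (htmono : StrictMono tseq)
    (htbase : ∀ k < p, 0 < tseq k ∧ tseq k < ω)
    (htper : ∀ k, tseq (k + p) = tseq k + ω)
    (hfin : ∀ t : ℝ, {k : ℕ | tseq k < t}.Finite)
    (v : ℕ → X) (hvper : ∀ k, v (k + p) = v k)
    (x₀ : X)
    (hx₀ : x₀ - T ω x₀ = (∫ s in (0 : ℝ)..ω, T (ω - s) (h s))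
      + ∑ k ∈ Finset.range p, T (ω - tseq k) (v k))
    (u : ℝ → X)
    (hu : u = fun t => T t x₀ + (∫ s in (0 : ℝ)..t, T (t - s) (h s))
      + ∑ k ∈ (hfin t).toFinset, T (t - tseq k) (v k)) :
    ∀ t : ℝ, 0 ≤ t → u (t + ω) = u t := by
  intro t ht
  subst hu
  dsimp only
  -- term 1
  have h1 : T (t + ω) x₀ = T t (T ω x₀) := by rw [hTadd t ω ht hω.le]; rfl
  -- the integral term
  have hInt1 : IntervalIntegrable (fun s => T (t + ω - s) (h s)) volume 0 ω :=
    aux_int T hTcont h hhint (t + ω) 0 ω le_rfl hω.le (by linarith) (by linarith)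
  have hInt2 : IntervalIntegrable (fun s => T (t + ω - s) (h s)) volume ω (t + ω) :=
    aux_int T hTcont h hhint (t + ω) ω (t + ω) hω.le (by linarith) (by linarith) le_rfl
  have hsplit : (∫ s in (0 : ℝ)..(t + ω), T (t + ω - s) (h s))
      = (∫ s in (0 : ℝ)..ω, T (t + ω - s) (h s))
        + ∫ s in ω..(t + ω), T (t + ω - s) (h s) :=
    (integral_add_adjacent_intervals hInt1 hInt2).symm
  have hshift : (∫ s in ω..(t + ω), T (t + ω - s) (h s))
      = ∫ s in (0 : ℝ)..t, T (t - s) (h s) := by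
    have hc := intervalIntegral.integral_comp_add_right (a := 0) (b := t)
      (fun s => T (t + ω - s) (h s)) ω
    rw [zero_add] at hc
    rw [← hc]
    apply intervalIntegral.integral_congr
    intro s hs
    rw [Set.uIcc_of_le ht] at hs
    have he : t + ω - (s + ω) = t - s := by ring
    simp only [he, hhper s hs.1]
  have hpull : (∫ s in (0 : ℝ)..ω, T (t + ω - s) (h s))
      = T t (∫ s in (0 : ℝ)..ω, T (ω - s) (h s)) := by
    have hIω : IntervalIntegrable (fun s => T (ω - s) (h s)) volume 0 ω :=
      aux_int T hTcont h hhint ω 0 ω le_rfl hω.le hω.le le_rfl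
    rw [← (T t).intervalIntegral_comp_comm hIω]
    apply intervalIntegral.integral_congr
    intro s hs
    rw [Set.uIcc_of_le hω.le] at hs
    have he : t + ω - s = t + (ω - s) := by ring
    show T (t + ω - s) (h s) = T t (T (ω - s) (h s))
    rw [he, hTadd t (ω - s) ht (by linarith [hs.2])]
    rfl
  -- the sum term
  have hset : (hfin (t + ω)).toFinset
      = Finset.range p ∪ (hfin t).toFinset.image (· + p) := by
    ext k
    simp only [Set.Finite.mem_toFinset, Set.mem_setOf_eq, Finset.mem_union,
      Finset.mem_range, Finset.mem_image]
    constructor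
    · intro hk
      by_cases hkp : k < p
      · exact Or.inl hkp
      · right
        have hk' : k - p + p = k := Nat.sub_add_cancel (not_lt.1 hkp)
        refine ⟨k - p, ?_, hk'⟩
        have hper := htper (k - p)
        rw [hk'] at hper
        linarith [hper ▸ hk]
    · rintro (hk | ⟨j, hj, rfl⟩)
      · exact lt_of_lt_of_le (htbase k hk).2 (by linarith)
      · rw [htper j]
        linarith
  have hdisj : Disjoint (Finset.range p) ((hfin t).toFinset.image (· + p)) := by
    rw [Finset.disjoint_left]
    rintro k hk hk'
    obtain ⟨j, _, rfl⟩ := Finset.mem_image.1 hk'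
    exact absurd (Finset.mem_range.1 hk) (by omega)
  have hinj : ∀ j ∈ (hfin t).toFinset, ∀ j' ∈ (hfin t).toFinset,
      j + p = j' + p → j = j' := fun j _ j' _ hjj' => by omega
  have hsum : ∑ k ∈ (hfin (t + ω)).toFinset, T (t + ω - tseq k) (v k)
      = T t (∑ k ∈ Finset.range p, T (ω - tseq k) (v k))
        + ∑ k ∈ (hfin t).toFinset, T (t - tseq k) (v k) := by
    rw [hset, Finset.sum_union hdisj, Finset.sum_image hinj]
    congr 1
    · rw [map_sum]
      refine Finset.sum_congr rfl fun k hk => ?_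
      have hkp := Finset.mem_range.1 hk
      have he : t + ω - tseq k = t + (ω - tseq k) := by ring
      rw [he, hTadd t (ω - tseq k) ht (by linarith [(htbase k hkp).2])]
      rfl
    · refine Finset.sum_congr rfl fun j _ => ?_
      rw [htper j, hvper j, show t + ω - (tseq j + ω) = t - tseq j from by ring]
  rw [h1, hsplit, hshift, hpull, hsum]
  have hx : T ω x₀ + ((∫ s in (0 : ℝ)..ω, T (ω - s) (h s))
      + ∑ k ∈ Finset.range p, T (ω - tseq k) (v k)) = x₀ := by
    rw [← hx₀]; abel
  have key : T t (T ω x₀) + T t (∫ s in (0 : ℝ)..ω, T (ω - s) (h s))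
      + T t (∑ k ∈ Finset.range p, T (ω - tseq k) (v k)) = T t x₀ := by
    rw [← map_add, ← map_add, add_assoc, hx]
  rw [← key]
  abel
end
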